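/- Let $f \in \mathbb{C}_p[[X]]$ converge on the open unit disk and suppose $f$ is $O(\log_p(1+X)^{1/2})$ (i.e., $|f|_r = O(|\log_p(1+X)|_r^{1/2})$ as $r \to 1^-$). If $f(\zeta - 1) = 0$ for every $p$-power root of unity $\zeta$ (all $\zeta$ with $\zeta^{p^n} = 1$ for some $n$), then $f = 0$. -/

import Mathlib

open Filter

section Aux

lemma aux_geom_bound {t : ℝ} (h0 : 0 ≤ t) (h1 : t < 1) (n : ℕ) :
    ((n : ℝ) + 1) * t ^ n ≤ (1 - t)⁻¹ := by
  have h2 : ((n : ℝ) + 1) * t ^ n ≤ ∑ k ∈ Finset.range (n + 1), t ^ k := by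
    have := Finset.card_nsmul_le_sum (Finset.range (n + 1)) (fun k => t ^ k) (t ^ n)
      (fun i hi => pow_le_pow_of_le_one h0 h1.le (by simpa using Nat.lt_succ_iff.mp (Finset.mem_range.mp hi)))
    simpa [Finset.card_range, nsmul_eq_mul, add_comm] using this
  refine h2.trans ?_
  have h3 := Summable.sum_le_tsum (Finset.range (n + 1)) (fun k _ => pow_nonneg h0 k)
    (summable_geometric_of_lt_one h0 h1)
  rwa [tsum_geometric_of_lt_one h0 h1] at h3

lemma aux_sqrt_bound {s : ℝ} (h0 : 0 ≤ s) (h1 : s < 1) (n : ℕ) :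
    Real.sqrt ((n : ℝ) + 1) * s ^ n ≤ Real.sqrt ((1 - s ^ 2)⁻¹) := by
  have hs2 : s ^ 2 < 1 := by nlinarith
  have key : Real.sqrt ((s ^ 2) ^ n) = s ^ n := by
    rw [show (s ^ 2) ^ n = (s ^ n) ^ 2 by ring, Real.sqrt_sq (pow_nonneg h0 n)]
  rw [← key, ← Real.sqrt_mul (by positivity)]
  exact Real.sqrt_le_sqrt (aux_geom_bound (by positivity) hs2 n)

lemma aux_sqrt_le_self {x : ℝ} (hx : 1 ≤ x) : Real.sqrt x ≤ x := by
  nlinarith [Real.sq_sqrt (by linarith : (0:ℝ) ≤ x), Real.sqrt_nonneg x]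

end Aux

section Peel

variable {K : Type*} [NormedField K] [IsUltrametricDist K] [CompleteSpace K]

/-- Growth condition: coefficients are `O(sqrt (n+1))`. -/
def SlowGrowth (a : ℕ → K) : Prop :=
  ∃ C : ℝ, 0 ≤ C ∧ ∀ n, ‖a n‖ ≤ C * Real.sqrt ((n : ℝ) + 1)

lemma slowGrowth_summable {a : ℕ → K} (ha : SlowGrowth a) {z : K} (hz : ‖z‖ < 1) :
    Summable (fun n => a n * z ^ n) := by
  obtain ⟨C, hC0, hC⟩ := ha
  apply Summable.of_norm
  have hsum : Summable (fun n : ℕ => C * (((n : ℝ) + 1) * ‖z‖ ^ n)) := by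
    apply Summable.mul_left
    have h1 : Summable (fun n : ℕ => (n : ℝ) ^ 1 * ‖z‖ ^ n) :=
      summable_pow_mul_geometric_of_norm_lt_one 1 (by simpa using hz)
    have h2 : Summable (fun n : ℕ => ‖z‖ ^ n) := summable_geometric_of_lt_one (norm_nonneg z) hz
    simpa [add_mul, pow_one] using h1.add h2
  apply Summable.of_nonneg_of_le (fun n => norm_nonneg _) _ hsum
  intro n
  rw [norm_mul, norm_pow]
  have h1 : ‖a n‖ ≤ C * (((n : ℝ) + 1)) := by
    refine (hC n).trans ?_
    have := aux_sqrt_le_self (by push_cast; linarith : (1:ℝ) ≤ (n : ℝ) + 1)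
    nlinarith
  calc ‖a n‖ * ‖z‖ ^ n ≤ (C * ((n : ℝ) + 1)) * ‖z‖ ^ n := by
        apply mul_le_mul_of_nonneg_right h1 (pow_nonneg (norm_nonneg z) n)
    _ = C * (((n : ℝ) + 1) * ‖z‖ ^ n) := by ring

lemma peel_one {a : ℕ → K} (ha : SlowGrowth a) {z : K} (hz : ‖z‖ < 1)
    (h0 : HasSum (fun n => a n * z ^ n) 0) :
    ∃ b : ℕ → K, SlowGrowth b ∧ (∀ n, a n = (if n = 0 then 0 else b (n - 1)) - z * b n) ∧
      ∀ w : K, ‖w‖ < 1 → w ≠ z → HasSum (fun n => a n * w ^ n) 0 →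
        HasSum (fun n => b n * w ^ n) 0 := by
  obtain ⟨C, hC0, hC⟩ := ha
  have hshift : ∀ d : ℕ, SlowGrowth (fun k => a (d + k)) := by
    intro d
    refine ⟨C * Real.sqrt ((d : ℝ) + 1), by positivity, fun k => ?_⟩
    calc ‖a (d + k)‖ ≤ C * Real.sqrt (((d + k : ℕ) : ℝ) + 1) := hC _
      _ ≤ C * Real.sqrt (((d : ℝ) + 1) * ((k : ℝ) + 1)) := by
          apply mul_le_mul_of_nonneg_left _ hC0
          apply Real.sqrt_le_sqrt
          push_cast
          nlinarith [Nat.cast_nonneg (α := ℝ) d, Nat.cast_nonneg (α := ℝ) k]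
      _ = C * Real.sqrt ((d : ℝ) + 1) * Real.sqrt ((k : ℝ) + 1) := by
          rw [Real.sqrt_mul (by positivity)]; ring
  have hsum : ∀ d : ℕ, Summable (fun k => a (d + k) * z ^ k) :=
    fun d => slowGrowth_summable (hshift d) hz
  set b : ℕ → K := fun n => ∑' k, a ((n + 1) + k) * z ^ k with hbdef
  have hrec : ∀ n, b n = a (n + 1) + z * b (n + 1) := by
    intro n
    have h1 := Summable.tsum_eq_zero_add (hsum (n + 1))
    have h2 : ∀ k : ℕ, a ((n + 1) + (k + 1)) * z ^ (k + 1) = z * (a ((n + 1 + 1) + k) * z ^ k) := by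
      intro k
      have h3 : (n + 1) + (k + 1) = (n + 1 + 1) + k := by omega
      rw [h3]; ring
    simp only [h2, pow_zero, mul_one, tsum_mul_left, add_zero] at h1
    have e1 : b n = ∑' k, a (n + 1 + k) * z ^ k := rfl
    have e2 : b (n + 1) = ∑' k, a (n + 1 + 1 + k) * z ^ k := rfl
    rw [e1, e2]
    exact h1
  have h00 : a 0 + z * b 0 = 0 := by
    have h1 := Summable.tsum_eq_zero_add h0.summable
    rw [h0.tsum_eq] at h1
    have h2 : ∀ k : ℕ, a (k + 1) * z ^ (k + 1) = z * (a (0 + 1 + k) * z ^ k) := by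
      intro k
      have h3 : k + 1 = 0 + 1 + k := by omega
      rw [h3]; ring
    simp only [h2, pow_zero, mul_one, tsum_mul_left] at h1
    have e1 : b 0 = ∑' k, a (0 + 1 + k) * z ^ k := rfl
    rw [e1]
    linear_combination -h1
  have hrel : ∀ n, a n = (if n = 0 then 0 else b (n - 1)) - z * b n := by
    intro n
    cases n with
    | zero =>
      rw [if_pos rfl]
      linear_combination h00
    | succ n =>
      have h2 : (if n + 1 = 0 then (0 : K) else b (n + 1 - 1)) = b n := by simp
      rw [h2, hrec n]; ring
  have hgb : SlowGrowth b := by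
    refine ⟨C * Real.sqrt ((1 - ‖z‖ ^ 2)⁻¹) * Real.sqrt 2, by positivity, fun n => ?_⟩
    have hbound : ∀ k : ℕ, ‖a ((n + 1) + k) * z ^ k‖ ≤
        (C * Real.sqrt (((n + 1 : ℕ) : ℝ) + 1)) * Real.sqrt ((1 - ‖z‖ ^ 2)⁻¹) := by
      intro k
      rw [norm_mul, norm_pow]
      calc ‖a ((n + 1) + k)‖ * ‖z‖ ^ k
          ≤ (C * Real.sqrt (((n + 1 : ℕ) : ℝ) + 1) * Real.sqrt ((k : ℝ) + 1)) * ‖z‖ ^ k := by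
            apply mul_le_mul_of_nonneg_right _ (pow_nonneg (norm_nonneg z) k)
            calc ‖a ((n + 1) + k)‖ ≤ C * Real.sqrt (((n + 1 + k : ℕ) : ℝ) + 1) := hC _
              _ ≤ C * Real.sqrt ((((n + 1 : ℕ) : ℝ) + 1) * ((k : ℝ) + 1)) := by
                  apply mul_le_mul_of_nonneg_left _ hC0
                  apply Real.sqrt_le_sqrt; push_cast
                  nlinarith [Nat.cast_nonneg (α := ℝ) n, Nat.cast_nonneg (α := ℝ) k]
              _ = C * Real.sqrt (((n + 1 : ℕ) : ℝ) + 1) * Real.sqrt ((k : ℝ) + 1) := by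
                  rw [Real.sqrt_mul (by positivity)]; ring
        _ = (C * Real.sqrt (((n + 1 : ℕ) : ℝ) + 1)) * (Real.sqrt ((k : ℝ) + 1) * ‖z‖ ^ k) := by ring
        _ ≤ (C * Real.sqrt (((n + 1 : ℕ) : ℝ) + 1)) * Real.sqrt ((1 - ‖z‖ ^ 2)⁻¹) := by
            apply mul_le_mul_of_nonneg_left (aux_sqrt_bound (norm_nonneg z) hz k) (by positivity)
    have e1 : b n = ∑' k, a ((n + 1) + k) * z ^ k := rfl
    have h1 : ‖b n‖ ≤ (C * Real.sqrt (((n + 1 : ℕ) : ℝ) + 1)) * Real.sqrt ((1 - ‖z‖ ^ 2)⁻¹) := by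
      rw [e1]
      exact IsUltrametricDist.norm_tsum_le_of_forall_le_of_nonneg (by positivity) hbound
    refine h1.trans ?_
    have h2 : Real.sqrt (((n + 1 : ℕ) : ℝ) + 1) ≤ Real.sqrt 2 * Real.sqrt ((n : ℝ) + 1) := by
      rw [← Real.sqrt_mul (by norm_num)]
      apply Real.sqrt_le_sqrt; push_cast; nlinarith [Nat.cast_nonneg (α := ℝ) n]
    calc C * Real.sqrt (((n + 1 : ℕ) : ℝ) + 1) * Real.sqrt ((1 - ‖z‖ ^ 2)⁻¹)
        ≤ C * (Real.sqrt 2 * Real.sqrt ((n : ℝ) + 1)) * Real.sqrt ((1 - ‖z‖ ^ 2)⁻¹) := by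
          apply mul_le_mul_of_nonneg_right _ (Real.sqrt_nonneg _)
          exact mul_le_mul_of_nonneg_left h2 hC0
      _ = C * Real.sqrt ((1 - ‖z‖ ^ 2)⁻¹) * Real.sqrt 2 * Real.sqrt ((n : ℝ) + 1) := by ring
  refine ⟨b, hgb, hrel, ?_⟩
  intro w hw hwz hva
  have hsb : Summable (fun n => b n * w ^ n) := slowGrowth_summable hgb hw
  obtain ⟨v, hv⟩ := hsb
  set f : ℕ → K := fun n => (if n = 0 then 0 else b (n - 1)) * w ^ n with hfdef
  have hf1 : HasSum (fun n => f (n + 1)) (v * w) := by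
    have h5 := hv.mul_right w
    have e : (fun n => f (n + 1)) = fun n => b n * w ^ n * w := by
      funext n
      show (if n + 1 = 0 then 0 else b (n + 1 - 1)) * w ^ (n + 1) = b n * w ^ n * w
      rw [if_neg (Nat.succ_ne_zero n), Nat.add_sub_cancel, pow_succ]
      ring
    rw [e]
    exact h5
  have hf : HasSum f (v * w) := by
    have h6 := (hasSum_nat_add_iff (f := f) 1).mp hf1
    simpa [hfdef] using h6
  have hzb : HasSum (fun n => z * (b n * w ^ n)) (z * v) := hv.mul_left z
  have haw : HasSum (fun n => a n * w ^ n) (v * w - z * v) := by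
    have h7 := hf.sub hzb
    have e : (fun n => a n * w ^ n) = fun n => f n - z * (b n * w ^ n) := by
      funext n
      rw [hrel n, sub_mul]
      simp only [hfdef]
      ring
    rw [e]
    exact h7
  have h8 : v * w - z * v = 0 := haw.unique hva
  have h9 : (w - z) * v = 0 := by linear_combination h8
  have hv0 : v = 0 := by
    rcases mul_eq_zero.mp h9 with h | h
    · exact absurd (sub_eq_zero.mp h) hwz
    · exact h
  rwa [hv0] at hv

lemma mk_eq {a b : ℕ → K} {z : K}
    (h : ∀ n, a n = (if n = 0 then 0 else b (n - 1)) - z * b n) :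
    PowerSeries.mk a = (PowerSeries.X - PowerSeries.C z) * PowerSeries.mk b := by
  ext n
  rw [PowerSeries.coeff_mk, sub_mul, map_sub]
  cases n with
  | zero =>
    have h1 : (PowerSeries.coeff 0) (PowerSeries.X * PowerSeries.mk b) = 0 := by
      simp [PowerSeries.coeff_zero_eq_constantCoeff, map_mul]
    have h2 : (PowerSeries.coeff 0) (PowerSeries.C z * PowerSeries.mk b) = z * b 0 := by
      simp [PowerSeries.coeff_zero_eq_constantCoeff, map_mul]
    rw [h1, h2, h 0, if_pos rfl]
  | succ n =>
    rw [PowerSeries.coeff_succ_X_mul, PowerSeries.coeff_mk, h (n + 1),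
      if_neg (Nat.succ_ne_zero n), Nat.add_sub_cancel]
    congr 1
    simp [PowerSeries.coeff_C_mul]

lemma norm_step {b : ℕ → K} (hb : SlowGrowth b) {z : K} {s B : ℝ}
    (hs0 : 0 < s) (hs1 : s < 1) (hzs : ‖z‖ < s) (hB0 : 0 ≤ B)
    (hB : ∀ n, ‖(if n = 0 then 0 else b (n - 1)) - z * b n‖ * s ^ n ≤ B) :
    ∀ n, ‖b n‖ * s ^ n ≤ B / s := by
  obtain ⟨C, hC0, hC⟩ := hb
  have hbd : BddAbove (Set.range fun n => ‖b n‖ * s ^ n) := by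
    refine ⟨C * Real.sqrt ((1 - s ^ 2)⁻¹), ?_⟩
    rintro x ⟨n, rfl⟩
    calc ‖b n‖ * s ^ n ≤ (C * Real.sqrt ((n : ℝ) + 1)) * s ^ n :=
          mul_le_mul_of_nonneg_right (hC n) (pow_nonneg hs0.le n)
      _ = C * (Real.sqrt ((n : ℝ) + 1) * s ^ n) := by ring
      _ ≤ C * Real.sqrt ((1 - s ^ 2)⁻¹) :=
          mul_le_mul_of_nonneg_left (aux_sqrt_bound hs0.le hs1 n) hC0
  set A := ⨆ n : ℕ, ‖b n‖ * s ^ n with hA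
  have hle : ∀ n, ‖b n‖ * s ^ n ≤ A := fun n => le_ciSup hbd n
  have hkey : ∀ n, ‖b n‖ * s ^ n ≤ max (B / s) ((‖z‖ / s) * A) := by
    intro n
    have hbn : b n = ((if n + 1 = 0 then 0 else b (n + 1 - 1)) - z * b (n + 1)) + z * b (n + 1) := by
      rw [if_neg (Nat.succ_ne_zero n), Nat.add_sub_cancel]; ring
    have h1 : ‖b n‖ ≤ max ‖(if n + 1 = 0 then 0 else b (n + 1 - 1)) - z * b (n + 1)‖
        (‖z * b (n + 1)‖) := by
      conv_lhs => rw [hbn]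
      exact IsUltrametricDist.norm_add_le_max _ _
    have h2 : ‖b n‖ * s ^ n ≤ max (‖(if n + 1 = 0 then 0 else b (n + 1 - 1)) - z * b (n + 1)‖ * s ^ n)
        (‖z * b (n + 1)‖ * s ^ n) := by
      rw [← max_mul_of_nonneg _ _ (pow_nonneg hs0.le n)]
      exact mul_le_mul_of_nonneg_right h1 (pow_nonneg hs0.le n)
    refine h2.trans (max_le_max ?_ ?_)
    · rw [le_div_iff₀ hs0]
      calc ‖(if n + 1 = 0 then 0 else b (n + 1 - 1)) - z * b (n + 1)‖ * s ^ n * s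
          = ‖(if n + 1 = 0 then 0 else b (n + 1 - 1)) - z * b (n + 1)‖ * s ^ (n + 1) := by
            rw [pow_succ]; ring
        _ ≤ B := hB (n + 1)
    · rw [norm_mul]
      calc ‖z‖ * ‖b (n + 1)‖ * s ^ n = (‖z‖ / s) * (‖b (n + 1)‖ * (s ^ n * s)) := by
            field_simp
        _ = (‖z‖ / s) * (‖b (n + 1)‖ * s ^ (n + 1)) := by rw [pow_succ]
        _ ≤ (‖z‖ / s) * A :=
            mul_le_mul_of_nonneg_left (hle (n + 1)) (div_nonneg (norm_nonneg z) hs0.le)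
  have hAle : A ≤ max (B / s) ((‖z‖ / s) * A) := ciSup_le hkey
  have hfin : A ≤ B / s := by
    rcases le_max_iff.mp hAle with h | h
    · exact h
    · have hzs1 : ‖z‖ / s < 1 := (div_lt_one hs0).mpr hzs
      have hA0 : A ≤ 0 := by nlinarith
      exact hA0.trans (div_nonneg hB0 hs0.le)
  exact fun n => (hle n).trans hfin

lemma main_peel (S : Finset K) :
    ∀ a : ℕ → K, SlowGrowth a → (∀ z ∈ S, ‖z‖ < 1) →
    (∀ z ∈ S, HasSum (fun n => a n * z ^ n) 0) →
    ∃ b : ℕ → K, SlowGrowth b ∧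
      PowerSeries.mk a = (∏ z ∈ S, (PowerSeries.X - PowerSeries.C z)) * PowerSeries.mk b ∧
      ∀ s B : ℝ, 0 < s → s < 1 → 0 ≤ B → (∀ z ∈ S, ‖z‖ < s) →
        (∀ n, ‖a n‖ * s ^ n ≤ B) → ∀ n, ‖b n‖ * s ^ n ≤ B / s ^ S.card := by
  classical
  induction S using Finset.induction_on with
  | empty =>
    intro a ha _ _
    exact ⟨a, ha, by simp, by intro s B _ _ _ _ h n; simpa using h n⟩
  | @insert z S' hzS' ih =>
    intro a ha hS1 hSv
    have hz1 : ‖z‖ < 1 := hS1 z (Finset.mem_insert_self _ _)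
    obtain ⟨b₁, hb₁g, hrel, htrans⟩ := peel_one ha hz1 (hSv z (Finset.mem_insert_self _ _))
    obtain ⟨b, hbg, heq, hnorm⟩ := ih b₁ hb₁g
      (fun w hw => hS1 w (Finset.mem_insert_of_mem hw))
      (fun w hw => htrans w (hS1 w (Finset.mem_insert_of_mem hw))
        (by rintro rfl; exact hzS' hw) (hSv w (Finset.mem_insert_of_mem hw)))
    refine ⟨b, hbg, ?_, ?_⟩
    · rw [Finset.prod_insert hzS', mul_assoc, ← heq, ← mk_eq hrel]
    · intro s B hs0 hs1 hB0 hszs hB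
      have h1 : ∀ n, ‖b₁ n‖ * s ^ n ≤ B / s :=
        norm_step hb₁g hs0 hs1 (hszs z (Finset.mem_insert_self _ _)) hB0
          (fun n => by rw [← hrel n]; exact hB n)
      have h2 := hnorm s (B / s) hs0 hs1 (div_nonneg hB0 hs0.le)
        (fun w hw => hszs w (Finset.mem_insert_of_mem hw)) h1
      intro n
      refine (h2 n).trans (le_of_eq ?_)
      rw [Finset.card_insert_of_notMem hzS', pow_succ, div_div]
      ring_nf

end Peel

section RootNorm

variable {K : Type*} [NormedField K] [IsUltrametricDist K]

lemma root_norm {p : ℕ} (hp : p.Prime) (hpnorm : ‖(p : K)‖ = (p : ℝ)⁻¹)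
    {m : ℕ} (hm : 1 ≤ m) {ζ : K} (hζ : ζ ^ p ^ m = 1) :
    ‖ζ - 1‖ < ((p : ℝ)⁻¹) ^ (((p ^ m : ℕ) : ℝ))⁻¹ := by
  set N := p ^ m with hN
  have hp1 : (1 : ℝ) < p := by exact_mod_cast hp.one_lt
  have hp0 : (0 : ℝ) < p := by linarith
  have hpinv1 : (p : ℝ)⁻¹ < 1 := by rw [inv_lt_one_iff₀]; right; exact hp1
  have hpinv0 : (0 : ℝ) < (p : ℝ)⁻¹ := by positivity
  have hN2 : 2 ≤ N := by
    calc 2 ≤ p := hp.two_le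
      _ = p ^ 1 := (pow_one p).symm
      _ ≤ p ^ m := Nat.pow_le_pow_right hp.pos hm
  have hN0 : (0 : ℝ) < ((N : ℕ) : ℝ) := by positivity
  have hspos : (0 : ℝ) < ((p : ℝ)⁻¹) ^ (((N : ℕ) : ℝ))⁻¹ := Real.rpow_pos_of_pos hpinv0 _
  set u := ζ - 1 with hu
  set t := ‖u‖ with ht
  rcases eq_or_lt_of_le (norm_nonneg u) with h0 | h0
  · have ht0 : t = 0 := h0.symm
    rw [ht0]; exact hspos
  -- key algebraic identity
  have hpow : (u + 1) ^ N = 1 := by rw [hu]; simpa using hζ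
  have hexp : u ^ N = -∑ k ∈ Finset.Ico 1 N, u ^ k * ((N.choose k : ℕ) : K) := by
    have h1 := add_pow u 1 N
    rw [hpow] at h1
    simp only [one_pow, mul_one] at h1
    rw [Finset.range_eq_Ico, Finset.sum_eq_sum_Ico_succ_bot (by omega : 0 < N + 1)] at h1
    rw [Finset.sum_Ico_succ_top (by omega : 1 ≤ N)] at h1
    simp only [pow_zero, Nat.choose_zero_right, Nat.cast_one, mul_one, Nat.choose_self] at h1
    -- h1 : 1 = 1 + (∑ k ∈ Ico 1 N, u ^ k * (N.choose k) + u ^ N)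
    linear_combination -h1
  have hterm : ∀ k ∈ Finset.Ico 1 N, ‖u ^ k * ((N.choose k : ℕ) : K)‖ ≤ (p : ℝ)⁻¹ * t ^ k := by
    intro k hk
    obtain ⟨hk1, hkN⟩ := Finset.mem_Ico.mp hk
    obtain ⟨c, hc⟩ := Nat.Prime.dvd_choose_pow hp (by omega) (by omega : k ≠ p ^ m)
    rw [norm_mul, norm_pow, hN] at *
    rw [hc]
    push_cast
    rw [norm_mul, hpnorm]
    calc t ^ k * ((p : ℝ)⁻¹ * ‖(c : K)‖) ≤ t ^ k * ((p : ℝ)⁻¹ * 1) := by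
          apply mul_le_mul_of_nonneg_left _ (pow_nonneg (norm_nonneg u) k)
          exact mul_le_mul_of_nonneg_left (IsUltrametricDist.norm_natCast_le_one K c) hpinv0.le
      _ = (p : ℝ)⁻¹ * t ^ k := by ring
  have hnormN : t ^ N = ‖∑ k ∈ Finset.Ico 1 N, u ^ k * ((N.choose k : ℕ) : K)‖ := by
    rw [ht, ← norm_pow, hexp, norm_neg]
  -- t < 1
  have ht1 : t < 1 := by
    by_contra hcon
    push_neg at hcon
    have hb : ∀ k ∈ Finset.Ico 1 N, ‖u ^ k * ((N.choose k : ℕ) : K)‖ ≤ (p : ℝ)⁻¹ * t ^ (N - 1) := by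
      intro k hk
      obtain ⟨hk1, hkN⟩ := Finset.mem_Ico.mp hk
      refine (hterm k (Finset.mem_Ico.mpr ⟨hk1, hkN⟩)).trans ?_
      apply mul_le_mul_of_nonneg_left _ hpinv0.le
      exact pow_le_pow_right₀ hcon (by omega : k ≤ N - 1)
    have h2 : t ^ N ≤ (p : ℝ)⁻¹ * t ^ (N - 1) := by
      rw [hnormN]
      exact IsUltrametricDist.norm_sum_le_of_forall_le_of_nonneg (by positivity) hb
    have h3 : t ^ (N - 1) ≤ t ^ N := pow_le_pow_right₀ hcon (by omega)
    have h4 : (0 : ℝ) < t ^ (N - 1) := by positivity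
    nlinarith
  -- main bound
  have hb2 : ∀ k ∈ Finset.Ico 1 N, ‖u ^ k * ((N.choose k : ℕ) : K)‖ ≤ (p : ℝ)⁻¹ * t := by
    intro k hk
    obtain ⟨hk1, _⟩ := Finset.mem_Ico.mp hk
    refine (hterm k hk).trans ?_
    apply mul_le_mul_of_nonneg_left _ hpinv0.le
    calc t ^ k ≤ t ^ 1 := pow_le_pow_of_le_one h0.le ht1.le hk1
      _ = t := pow_one t
  have h2 : t ^ N ≤ (p : ℝ)⁻¹ * t := by
    rw [hnormN]
    exact IsUltrametricDist.norm_sum_le_of_forall_le_of_nonneg (by positivity) hb2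
  have h5 : t ^ (N - 1) ≤ (p : ℝ)⁻¹ := by
    have h6 : t ^ (N - 1) * t ≤ (p : ℝ)⁻¹ * t := by
      rw [← pow_succ]
      have : N - 1 + 1 = N := by omega
      rw [this]; exact h2
    exact le_of_mul_le_mul_right h6 h0
  have hN1R : (0 : ℝ) < ((N - 1 : ℕ) : ℝ) := by exact_mod_cast (by omega : 0 < N - 1)
  have h7 : t ≤ ((p : ℝ)⁻¹) ^ (((N - 1 : ℕ) : ℝ))⁻¹ := by
    have h8 := Real.rpow_le_rpow (by positivity) h5 (by positivity : (0:ℝ) ≤ (((N - 1 : ℕ) : ℝ))⁻¹)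
    rwa [← Real.rpow_natCast t (N - 1), ← Real.rpow_mul h0.le,
      mul_inv_cancel₀ hN1R.ne', Real.rpow_one] at h8
  refine h7.trans_lt ?_
  apply Real.rpow_lt_rpow_of_exponent_gt hpinv0 hpinv1
  rw [inv_lt_inv₀ hN0 hN1R]
  have : ((N - 1 : ℕ) : ℝ) = (N : ℝ) - 1 := by
    push_cast [Nat.cast_sub (by omega : 1 ≤ N)]; ring
  rw [this]; linarith

end RootNorm

/-- Let `f = ∑ aₙ Xⁿ` be a power series over a complete ultrametric
extension `K` of `ℚ_p` (containing all `p`-power roots of unity) of growth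
`O(log^{1/2})`, expressed by the standard coefficient criterion `‖aₙ‖ = O((n+1)^{1/2})`.
If `f(ζ - 1) = 0` for every `p`-power root of unity `ζ`, then `f = 0`. -/
theorem vanishing_at_cyclotomic_points (p : ℕ) (hp : p.Prime)
    (K : Type*) [NormedField K] [IsUltrametricDist K] [CompleteSpace K]
    (hpnorm : ‖(p : K)‖ = (p : ℝ)⁻¹)
    (hroots : ∀ m : ℕ, ∃ ζ : K, IsPrimitiveRoot ζ (p ^ m))
    (a : ℕ → K)
    (hgrowth : ∃ C : ℝ, ∀ n : ℕ, ‖a n‖ ≤ C * ((n : ℝ) + 1) ^ ((1 : ℝ) / 2))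
    (hvanish : ∀ m : ℕ, ∀ ζ : K, ζ ^ (p ^ m) = 1 →
      HasSum (fun n => a n * (ζ - 1) ^ n) 0) :
    ∀ n : ℕ, a n = 0 := by
  classical
  obtain ⟨C, hC⟩ := hgrowth
  have hC' : ∀ n : ℕ, ‖a n‖ ≤ C * Real.sqrt ((n : ℝ) + 1) := by
    intro n
    rw [Real.sqrt_eq_rpow]
    exact hC n
  have hC0 : 0 ≤ C := by
    have h1 := hC' 0
    simp only [Nat.cast_zero, zero_add, Real.sqrt_one, mul_one] at h1
    exact (norm_nonneg (a 0)).trans h1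
  have hg : SlowGrowth a := ⟨C, hC0, hC'⟩
  have hp1 : (1 : ℝ) < p := by exact_mod_cast hp.one_lt
  have hp0 : (0 : ℝ) < p := by linarith
  have hpinv1 : (p : ℝ)⁻¹ < 1 := by rw [inv_lt_one_iff₀]; right; exact hp1
  have hpinv0 : (0 : ℝ) < (p : ℝ)⁻¹ := by positivity
  have ha0 : a 0 = 0 := by
    have h := hvanish 0 1 (by simp)
    have h2 : (fun n => a n * ((1 : K) - 1) ^ n) = fun n => if n = 0 then a 0 else 0 := by
      funext n
      cases n with
      | zero => simp
      | succ n => simp [sub_self, zero_pow]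
    rw [h2] at h
    exact (hasSum_ite_eq 0 (a 0)).unique h
  by_contra hcon
  push_neg at hcon
  obtain ⟨n₀, hn₀⟩ := hcon
  have hex : ∃ n, a n ≠ 0 := ⟨n₀, hn₀⟩
  set j := Nat.find hex with hjdef
  have hja : a j ≠ 0 := Nat.find_spec hex
  have hjmin : ∀ k, k < j → a k = 0 := fun k hk => of_not_not (Nat.find_min hex hk)
  have hj1 : 1 ≤ j := by
    rcases Nat.eq_zero_or_pos j with h | h
    · rw [h] at hja; exact absurd ha0 hja
    · exact h
  have hε : 0 < ‖a j‖ := norm_pos_iff.mpr hja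
  -- the key quantitative estimate
  have key : ∀ m : ℕ, 1 ≤ m →
      ‖a j‖ * Real.sqrt ((p ^ m : ℕ) : ℝ) ≤
        C * Real.sqrt ((2 * Real.log p)⁻¹ + 1) * (p : ℝ) ^ j := by
    intro m hm
    obtain ⟨ζ, hζ⟩ := hroots m
    set N := p ^ m with hN
    have hN2 : 2 ≤ N := by
      calc 2 ≤ p := hp.two_le
        _ = p ^ 1 := (pow_one p).symm
        _ ≤ p ^ m := Nat.pow_le_pow_right hp.pos hm
    have hNR : (0 : ℝ) < ((N : ℕ) : ℝ) := by positivity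
    have hN1R : (1 : ℝ) ≤ ((N : ℕ) : ℝ) := by exact_mod_cast (by omega : 1 ≤ N)
    set s : ℝ := ((p : ℝ)⁻¹) ^ (((N : ℕ) : ℝ))⁻¹ with hs
    have hs0 : 0 < s := Real.rpow_pos_of_pos hpinv0 _
    have hs1 : s < 1 := Real.rpow_lt_one hpinv0.le hpinv1 (by positivity)
    set R := Polynomial.nthRootsFinset N (1 : K) with hR
    set S := R.image (fun ζ' => ζ' - 1) with hS
    have hmem : ∀ z ∈ S, ∃ ζ' : K, ζ' ^ N = 1 ∧ z = ζ' - 1 := by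
      intro z hz
      obtain ⟨ζ', hζ', rfl⟩ := Finset.mem_image.mp hz
      exact ⟨ζ', (Polynomial.mem_nthRootsFinset (by omega) 1).mp hζ', rfl⟩
    have hzs : ∀ z ∈ S, ‖z‖ < s := by
      intro z hz
      obtain ⟨ζ', h1, rfl⟩ := hmem z hz
      exact root_norm hp hpnorm hm h1
    have hz1 : ∀ z ∈ S, ‖z‖ < 1 := fun z hz => (hzs z hz).trans hs1
    have hvan : ∀ z ∈ S, HasSum (fun n => a n * z ^ n) 0 := by
      intro z hz
      obtain ⟨ζ', h1, rfl⟩ := hmem z hz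
      exact hvanish m ζ' h1
    obtain ⟨b, hbg, heq, hnorm⟩ := main_peel S a hg hz1 hvan
    -- identify the product with (X+1)^N - 1
    have hqpoly : (∏ z ∈ S, (PowerSeries.X - PowerSeries.C z)) =
        (((Polynomial.X + 1) ^ N - 1 : Polynomial K) : PowerSeries K) := by
      have h1 : (Polynomial.X : Polynomial K) ^ N - 1 =
          ∏ ζ' ∈ R, (Polynomial.X - Polynomial.C ζ') :=
        Polynomial.X_pow_sub_one_eq_prod (by omega) hζ
      have h2 := congrArg (Polynomial.aeval (Polynomial.X + 1 : Polynomial K)) h1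
      rw [map_sub, map_pow, Polynomial.aeval_X, map_one, map_prod] at h2
      have h3 : ∀ ζ' ∈ R, (Polynomial.aeval (Polynomial.X + 1 : Polynomial K))
          (Polynomial.X - Polynomial.C ζ') = Polynomial.X - Polynomial.C (ζ' - 1) := by
        intro ζ' _
        rw [map_sub, Polynomial.aeval_X, Polynomial.aeval_C, Polynomial.algebraMap_eq,
          map_sub, Polynomial.C_1]
        ring
      rw [Finset.prod_congr rfl h3] at h2
      rw [hS, Finset.prod_image (fun x _ y _ h => sub_left_injective h), h2,
        ← Polynomial.coeToPowerSeries.ringHom_apply, map_prod]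
      apply Finset.prod_congr rfl
      intro ζ' _
      rw [map_sub]
      simp [Polynomial.coeToPowerSeries.ringHom_apply]
    have heq2 : PowerSeries.mk a =
        (((Polynomial.X + 1) ^ N - 1 : Polynomial K) : PowerSeries K) * PowerSeries.mk b := by
      rw [← hqpoly]; exact heq
    have hqc : ∀ i : ℕ, ((Polynomial.X + 1) ^ N - 1 : Polynomial K).coeff i =
        if i = 0 then 0 else ((N.choose i : ℕ) : K) := by
      intro i
      rw [Polynomial.coeff_sub, Polynomial.coeff_X_add_one_pow, Polynomial.coeff_one]
      by_cases hi : i = 0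
      · subst hi; simp
      · simp [hi]
    have hcoeff : ∀ n : ℕ, a n = ∑ i ∈ Finset.range (n + 1),
        (if i = 0 then 0 else ((N.choose i : ℕ) : K)) * b (n - i) := by
      intro n
      have h1 := congrArg (PowerSeries.coeff n) heq2
      rw [PowerSeries.coeff_mk, PowerSeries.coeff_mul,
        Finset.Nat.sum_antidiagonal_eq_sum_range_succ_mk] at h1
      simp only [Polynomial.coeff_coe, hqc, PowerSeries.coeff_mk] at h1
      exact h1
    have hNK : ((N : ℕ) : K) ≠ 0 := by
      have hnn : ‖((N : ℕ) : K)‖ = ((p : ℝ)⁻¹) ^ m := by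
        rw [hN]
        push_cast
        rw [norm_pow, hpnorm]
      intro hcontra
      rw [hcontra, norm_zero] at hnn
      exact absurd hnn.symm (by positivity : (0:ℝ) < ((p : ℝ)⁻¹) ^ m).ne'
    have hbz : ∀ k, k + 1 < j → b k = 0 := by
      intro k
      induction k using Nat.strong_induction_on with
      | _ k IH =>
        intro hk
        have h1 := hcoeff (k + 1)
        rw [hjmin (k + 1) hk] at h1
        have h2 : ∑ i ∈ Finset.range (k + 2),
            (if i = 0 then 0 else ((N.choose i : ℕ) : K)) * b (k + 1 - i)
            = (if (1:ℕ) = 0 then 0 else ((N.choose 1 : ℕ) : K)) * b (k + 1 - 1) := by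
          apply Finset.sum_eq_single_of_mem 1 (Finset.mem_range.mpr (by omega))
          intro i hi hne
          have hik := Finset.mem_range.mp hi
          rcases Nat.eq_zero_or_pos i with rfl | hipos
          · simp
          · have hi2 : 2 ≤ i := by omega
            have hb0 : b (k + 1 - i) = 0 := IH (k + 1 - i) (by omega) (by omega)
            rw [hb0, mul_zero]
        rw [h2, if_neg (by omega : (1:ℕ) ≠ 0), Nat.choose_one_right, Nat.add_sub_cancel] at h1
        rcases mul_eq_zero.mp h1.symm with h | h
        · exact absurd h hNK
        · exact h
    have haj : a j = ((N : ℕ) : K) * b (j - 1) := by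
      have h1 := hcoeff j
      have h2 : ∑ i ∈ Finset.range (j + 1),
          (if i = 0 then 0 else ((N.choose i : ℕ) : K)) * b (j - i)
          = (if (1:ℕ) = 0 then 0 else ((N.choose 1 : ℕ) : K)) * b (j - 1) := by
        apply Finset.sum_eq_single_of_mem 1 (Finset.mem_range.mpr (by omega))
        intro i hi hne
        have hik := Finset.mem_range.mp hi
        rcases Nat.eq_zero_or_pos i with rfl | hipos
        · simp
        · have hi2 : 2 ≤ i := by omega
          have hb0 : b (j - i) = 0 := hbz (j - i) (by omega)
          rw [hb0, mul_zero]
      rw [h2, if_neg (by omega : (1:ℕ) ≠ 0), Nat.choose_one_right] at h1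
      exact h1
    have hnormN : ‖((N : ℕ) : K)‖ = ((N : ℕ) : ℝ)⁻¹ := by
      rw [hN]
      push_cast
      rw [norm_pow, hpnorm, ← inv_pow]
    have h3 : ‖a j‖ = ((N : ℕ) : ℝ)⁻¹ * ‖b (j - 1)‖ := by
      rw [haj, norm_mul, hnormN]
    set B := C * Real.sqrt ((1 - s ^ 2)⁻¹) with hB
    have hBa : ∀ n, ‖a n‖ * s ^ n ≤ B := by
      intro n
      calc ‖a n‖ * s ^ n ≤ (C * Real.sqrt ((n : ℝ) + 1)) * s ^ n :=
            mul_le_mul_of_nonneg_right (hC' n) (pow_nonneg hs0.le n)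
        _ = C * (Real.sqrt ((n : ℝ) + 1) * s ^ n) := by ring
        _ ≤ B := mul_le_mul_of_nonneg_left (aux_sqrt_bound hs0.le hs1 n) hC0
    have hB0 : 0 ≤ B := by positivity
    have h4 := hnorm s B hs0 hs1 hB0 hzs hBa (j - 1)
    have hcard : S.card = N := by
      rw [hS, Finset.card_image_of_injective _ (fun x y h => sub_left_injective h),
        hR, hζ.card_nthRootsFinset]
    rw [hcard] at h4
    have hsN : s ^ N = (p : ℝ)⁻¹ := by
      rw [hs, ← Real.rpow_natCast (((p : ℝ)⁻¹) ^ (((N : ℕ) : ℝ))⁻¹) N,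
        ← Real.rpow_mul hpinv0.le, inv_mul_cancel₀ hNR.ne', Real.rpow_one]
    rw [hsN] at h4
    -- h4 : ‖b (j - 1)‖ * s ^ (j - 1) ≤ B / (p : ℝ)⁻¹
    have hsp : (p : ℝ)⁻¹ ≤ s := by
      have hle1 : (((N : ℕ) : ℝ))⁻¹ ≤ 1 := by
        rw [inv_le_one_iff₀]; right; exact hN1R
      have := Real.rpow_le_rpow_of_exponent_ge hpinv0 hpinv1.le hle1
      rwa [Real.rpow_one] at this
    have h5 : ‖b (j - 1)‖ * ((p : ℝ)⁻¹) ^ (j - 1) ≤ B * p := by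
      calc ‖b (j - 1)‖ * ((p : ℝ)⁻¹) ^ (j - 1) ≤ ‖b (j - 1)‖ * s ^ (j - 1) :=
            mul_le_mul_of_nonneg_left (pow_le_pow_left₀ hpinv0.le hsp _) (norm_nonneg _)
        _ ≤ B / (p : ℝ)⁻¹ := h4
        _ = B * p := by rw [div_eq_mul_inv, inv_inv]
    have h6 : ‖b (j - 1)‖ ≤ B * (p : ℝ) ^ j := by
      have hpj : ((p : ℝ)⁻¹) ^ (j - 1) * (p : ℝ) ^ (j - 1) = 1 := by
        rw [← mul_pow, inv_mul_cancel₀ hp0.ne', one_pow]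
      have hjj : j - 1 + 1 = j := by omega
      calc ‖b (j - 1)‖ = ‖b (j - 1)‖ * (((p : ℝ)⁻¹) ^ (j - 1) * (p : ℝ) ^ (j - 1)) := by
            rw [hpj, mul_one]
        _ = (‖b (j - 1)‖ * ((p : ℝ)⁻¹) ^ (j - 1)) * (p : ℝ) ^ (j - 1) := by ring
        _ ≤ (B * p) * (p : ℝ) ^ (j - 1) := mul_le_mul_of_nonneg_right h5 (by positivity)
        _ = B * ((p : ℝ) * (p : ℝ) ^ (j - 1)) := by ring
        _ = B * (p : ℝ) ^ j := by rw [← pow_succ', hjj]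
    -- bound B in terms of N
    have hlog : 0 < Real.log p := Real.log_pos hp1
    have hs2exp : s ^ 2 = Real.exp (-(2 * Real.log p / ((N : ℕ) : ℝ))) := by
      rw [hs, ← Real.rpow_natCast (((p : ℝ)⁻¹) ^ (((N : ℕ) : ℝ))⁻¹) 2,
        ← Real.rpow_mul hpinv0.le, Real.rpow_def_of_pos hpinv0, Real.log_inv]
      congr 1
      push_cast
      ring
    set x := 2 * Real.log p / ((N : ℕ) : ℝ) with hx
    have hx0 : 0 < x := by positivity
    have hexpx : Real.exp (-x) ≤ (x + 1)⁻¹ := by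
      rw [Real.exp_neg]
      exact inv_anti₀ (by linarith) (by linarith [Real.add_one_le_exp x])
    have h1s : x / (x + 1) ≤ 1 - s ^ 2 := by
      rw [hs2exp]
      have he : x / (x + 1) = 1 - (x + 1)⁻¹ := by field_simp; ring
      rw [he]
      linarith
    have hinv : (1 - s ^ 2)⁻¹ ≤ (x + 1) / x := by
      have h7 : 0 < x / (x + 1) := by positivity
      have := inv_anti₀ h7 h1s
      rwa [inv_div] at this
    have hxval : (x + 1) / x ≤ ((2 * Real.log p)⁻¹ + 1) * ((N : ℕ) : ℝ) := by
      have he1 : (x + 1) / x = 1 + 1 / x := by field_simp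
      have he2 : 1 / x = ((N : ℕ) : ℝ) / (2 * Real.log p) := by
        rw [hx, one_div, inv_div]
      rw [he1, he2]
      have he3 : ((2 * Real.log p)⁻¹ + 1) * ((N : ℕ) : ℝ) =
          ((N : ℕ) : ℝ) / (2 * Real.log p) + ((N : ℕ) : ℝ) := by
        field_simp
      rw [he3]
      linarith
    have hKN : (1 - s ^ 2)⁻¹ ≤ ((2 * Real.log p)⁻¹ + 1) * ((N : ℕ) : ℝ) := hinv.trans hxval
    have hBle : B ≤ C * Real.sqrt ((2 * Real.log p)⁻¹ + 1) * Real.sqrt ((N : ℕ) : ℝ) := by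
      rw [hB, mul_assoc, ← Real.sqrt_mul (by positivity)]
      exact mul_le_mul_of_nonneg_left (Real.sqrt_le_sqrt hKN) hC0
    have hsqrtN : Real.sqrt ((N : ℕ) : ℝ) * Real.sqrt ((N : ℕ) : ℝ) = ((N : ℕ) : ℝ) :=
      Real.mul_self_sqrt hNR.le
    calc ‖a j‖ * Real.sqrt ((N : ℕ) : ℝ)
        = ((N : ℕ) : ℝ)⁻¹ * ‖b (j - 1)‖ * Real.sqrt ((N : ℕ) : ℝ) := by rw [h3]
      _ ≤ ((N : ℕ) : ℝ)⁻¹ * (B * (p : ℝ) ^ j) * Real.sqrt ((N : ℕ) : ℝ) := by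
          apply mul_le_mul_of_nonneg_right _ (Real.sqrt_nonneg _)
          exact mul_le_mul_of_nonneg_left h6 (by positivity)
      _ ≤ ((N : ℕ) : ℝ)⁻¹ * ((C * Real.sqrt ((2 * Real.log p)⁻¹ + 1) *
            Real.sqrt ((N : ℕ) : ℝ)) * (p : ℝ) ^ j) * Real.sqrt ((N : ℕ) : ℝ) := by
          apply mul_le_mul_of_nonneg_right _ (Real.sqrt_nonneg _)
          apply mul_le_mul_of_nonneg_left _ (by positivity)
          exact mul_le_mul_of_nonneg_right hBle (by positivity)
      _ = (C * Real.sqrt ((2 * Real.log p)⁻¹ + 1) * (p : ℝ) ^ j) *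
            (((N : ℕ) : ℝ)⁻¹ * (Real.sqrt ((N : ℕ) : ℝ) * Real.sqrt ((N : ℕ) : ℝ))) := by ring
      _ = C * Real.sqrt ((2 * Real.log p)⁻¹ + 1) * (p : ℝ) ^ j := by
          rw [hsqrtN, inv_mul_cancel₀ hNR.ne', mul_one]
  -- conclude by unboundedness
  set D := C * Real.sqrt ((2 * Real.log p)⁻¹ + 1) * (p : ℝ) ^ j with hD
  have hD0 : 0 ≤ D := by positivity
  obtain ⟨m, hm⟩ := pow_unbounded_of_one_lt ((D / ‖a j‖) ^ 2) hp1
  have hNm : ((D / ‖a j‖) ^ 2) < ((p ^ (m + 1) : ℕ) : ℝ) := by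
    push_cast
    calc (D / ‖a j‖) ^ 2 < (p : ℝ) ^ m := hm
      _ ≤ (p : ℝ) ^ (m + 1) := pow_le_pow_right₀ hp1.le (by omega)
  have hsq : D / ‖a j‖ < Real.sqrt ((p ^ (m + 1) : ℕ) : ℝ) := by
    have h8 := Real.sqrt_lt_sqrt (by positivity) hNm
    rwa [Real.sqrt_sq (by positivity : (0:ℝ) ≤ D / ‖a j‖)] at h8
  have hcontra : D < ‖a j‖ * Real.sqrt ((p ^ (m + 1) : ℕ) : ℝ) := by
    rw [div_lt_iff₀ hε] at hsq
    calc D < Real.sqrt ((p ^ (m + 1) : ℕ) : ℝ) * ‖a j‖ := hsq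
      _ = ‖a j‖ * Real.sqrt ((p ^ (m + 1) : ℕ) : ℝ) := mul_comm _ _
  exact absurd (key (m + 1) (by omega)) (not_le.mpr hcontra)
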